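/- Let A ∈ 𝓡 and let X⁽¹⁾, X⁽²⁾ be independent random vectors in [0,∞)^d with distributions F₁, F₂ ∈ 𝓛_A. If the one-dimensional convolution F_A⁽¹⁾ * F_A⁽²⁾ is strong subexponential (∈ 𝒮*), then the distribution of X⁽¹⁾ + X⁽²⁾ satisfies P[X⁽¹⁾+X⁽²⁾ ∈ xA] ∼ P[Y_A⁽¹⁾ + Y_A⁽²⁾ > x] as x → ∞, and F₁ * F₂ ∈ 𝒮*_A (i.e. the distribution of Y_A* = sup{u : X⁽¹⁾+X⁽²⁾ ∈ uA} is strong subexponential). Conversely, if F₁ * F₂ ∈ 𝒮*_A then F_A⁽¹⁾ * F_A⁽²⁾ ∈ 𝒮*. -/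

import Mathlib

open MeasureTheory ProbabilityTheory Filter Set Pointwise Asymptotics

/-- A set `A ⊆ ℝ^d` is increasing if `x ∈ A` and `y ≥ 0` componentwise imply `x + y ∈ A`. -/
def IncreasingSet {d : ℕ} (A : Set (Fin d → ℝ)) : Prop :=
  ∀ x ∈ A, ∀ y : Fin d → ℝ, (∀ i, 0 ≤ y i) → x + y ∈ A

/-- The family 𝓡 of open increasing sets with convex complement and `0 ∉ closure A`. -/
def MemR {d : ℕ} (A : Set (Fin d → ℝ)) : Prop :=
  IsOpen A ∧ IncreasingSet A ∧ Convex ℝ Aᶜ ∧ (0 : Fin d → ℝ) ∉ closure A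

/-- `P[X ∈ x·A]`. -/
noncomputable def probIn {d : ℕ} {Ω : Type*} [MeasurableSpace Ω] (P : Measure Ω)
    (X : Ω → (Fin d → ℝ)) (A : Set (Fin d → ℝ)) (x : ℝ) : ℝ :=
  (P {ω | X ω ∈ x • A}).toReal

/-- `Y_A = sup{u > 0 : X ∈ u·A}`. -/
noncomputable def YA {d : ℕ} {Ω : Type*} (X : Ω → (Fin d → ℝ)) (A : Set (Fin d → ℝ))
    (ω : Ω) : ℝ :=
  sSup {u : ℝ | 0 < u ∧ X ω ∈ u • A}

/-- The tail of the distribution `F_A` of `Y_A`. -/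
noncomputable def tailYA {d : ℕ} {Ω : Type*} [MeasurableSpace Ω] (P : Measure Ω)
    (X : Ω → (Fin d → ℝ)) (A : Set (Fin d → ℝ)) (x : ℝ) : ℝ :=
  (P {ω | x < YA X A ω}).toReal

/-- A (positive) tail function is long-tailed: `T(x−a)/T(x) → 1` for every `a > 0`. -/
def LongTailedFun (T : ℝ → ℝ) : Prop :=
  (∀ x, 0 < T x) ∧ ∀ a > 0, Tendsto (fun x => T (x - a) / T x) atTop (nhds 1)

/-- The mean `μ_V = ∫₀^∞ V̄(y) dy` computed from the tail function. -/
noncomputable def tailMean (T : ℝ → ℝ) : ℝ := ∫ y in Ioi (0 : ℝ), T y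

/-- Strong subexponentiality (class 𝒮*) of a tail function:
`∫₀^x T(x−y)T(y) dy ∼ 2 μ T(x)`, with `μ = ∫₀^∞ T < ∞` and `T > 0`. -/
def StrongSubexpFun (T : ℝ → ℝ) : Prop :=
  (∀ x, 0 < T x) ∧ IntegrableOn T (Ioi 0) volume ∧
    Tendsto (fun x => (∫ y in (0 : ℝ)..x, T (x - y) * T y) / T x) atTop
      (nhds (2 * tailMean T))

/-- `V̄_u(x) = min(1, ∫_x^{x+u} V̄(y) dy)`. -/
noncomputable def tailU (T : ℝ → ℝ) (u x : ℝ) : ℝ := min 1 (∫ y in x..(x + u), T y)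

/-- Strongly subexponential (class 𝒮_*): `V̄_u^{2*}(x)/V̄_u(x) → 2` uniformly in `u ∈ [1,∞)`,
where `V̄_u^{2*}` is the tail of the sum of two independent random variables with tail `V̄_u`. -/
def StronglySubexpFun (T : ℝ → ℝ) : Prop :=
  (∀ x, 0 < T x) ∧ IntegrableOn T (Ioi 0) volume ∧
    ∀ ε > (0 : ℝ), ∃ x₀ : ℝ, ∀ u ≥ (1 : ℝ), ∀ x ≥ x₀,
      ∀ (Ω' : Type) (_ : MeasurableSpace Ω') (Q : Measure Ω'), IsProbabilityMeasure Q →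
        ∀ Z₁ Z₂ : Ω' → ℝ, Measurable Z₁ → Measurable Z₂ → IndepFun Z₁ Z₂ Q →
          (∀ z, (Q {ω | z < Z₁ ω}).toReal = tailU T u z) →
          (∀ z, (Q {ω | z < Z₂ ω}).toReal = tailU T u z) →
          |(Q {ω | x < Z₁ ω + Z₂ ω}).toReal / tailU T u x - 2| < ε

/-- Insensitivity function of a tail function. -/
def Insensitivity (T : ℝ → ℝ) (h : ℝ → ℝ) : Prop :=
  (∀ x, 0 < h x) ∧ Tendsto h atTop atTop ∧ Tendsto (fun x => h x / x) atTop (nhds 0) ∧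
    Tendsto (fun x => T (x - h x) / T x) atTop (nhds 1) ∧
    Tendsto (fun x => T (x + h x) / T x) atTop (nhds 1)

/-- Generalized inverse of `h`. -/
noncomputable def geninv (h : ℝ → ℝ) (y : ℝ) : ℝ := sInf {x | 0 ≤ x ∧ y ≤ h x}

/-- Convolution closure for `𝒮*_A` within `𝓛_A`: for independent `X⁽¹⁾, X⁽²⁾` with
`F₁, F₂ ∈ 𝓛_A`, if `F_A⁽¹⁾ * F_A⁽²⁾ ∈ 𝒮*` (its tail is `P[Y_A⁽¹⁾+Y_A⁽²⁾ > x]`) then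
`P[X⁽¹⁾+X⁽²⁾ ∈ xA] ∼ P[Y_A⁽¹⁾+Y_A⁽²⁾ > x]` and `F₁ * F₂ ∈ 𝒮*_A`; conversely,
if `F₁ * F₂ ∈ 𝒮*_A` then `F_A⁽¹⁾ * F_A⁽²⁾ ∈ 𝒮*`. -/
noncomputable def gA {d : ℕ} (A : Set (Fin d → ℝ)) (v : Fin d → ℝ) : ℝ :=
  sSup {u : ℝ | 0 < u ∧ v ∈ u • A}

section Geometry
variable {d : ℕ} {A : Set (Fin d → ℝ)}

lemma mem_smul' {u : ℝ} (hu : u ≠ 0) {v : Fin d → ℝ} : v ∈ u • A ↔ u⁻¹ • v ∈ A :=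
  Set.mem_smul_set_iff_inv_smul_mem₀ hu _ _

lemma MemR.zero_not_mem (hA : MemR A) : (0 : Fin d → ℝ) ∉ A :=
  fun h => hA.2.2.2 (subset_closure h)

lemma MemR.scale_mem (hA : MemR A) {a : Fin d → ℝ} (ha : a ∈ A) {t : ℝ} (ht : 1 ≤ t) :
    t • a ∈ A := by
  by_contra h
  have h0 : (0 : Fin d → ℝ) ∈ Aᶜ := hA.zero_not_mem
  have ht0 : 0 < t := lt_of_lt_of_le one_pos ht
  have hb : (0:ℝ) < t⁻¹ := by positivity
  have hb1 : t⁻¹ ≤ 1 := by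
    rw [inv_le_one_iff₀]; right; exact ht
  have := hA.2.2.1 h h0 hb.le (by linarith : (0:ℝ) ≤ 1 - t⁻¹) (by ring)
  rw [smul_zero, add_zero, smul_smul, inv_mul_cancel₀ ht0.ne', one_smul] at this
  exact this ha

lemma MemR.exists_eps (hA : MemR A) : ∃ ε > (0:ℝ), ∀ a ∈ A, ε ≤ ‖a‖ := by
  have := hA.2.2.2
  rw [Metric.mem_closure_iff] at this
  push_neg at this
  obtain ⟨ε, hε, h⟩ := this
  exact ⟨ε, hε, fun a ha => by simpa [dist_eq_norm] using h a ha⟩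

lemma MemR.bddAbove (hA : MemR A) (v : Fin d → ℝ) :
    BddAbove {u : ℝ | 0 < u ∧ v ∈ u • A} := by
  obtain ⟨ε, hε, h⟩ := hA.exists_eps
  refine ⟨‖v‖ / ε, fun u hu => ?_⟩
  obtain ⟨hu0, hm⟩ := hu
  rw [mem_smul' hu0.ne'] at hm
  have h1 : ε ≤ ‖u⁻¹ • v‖ := h _ hm
  rw [norm_smul, Real.norm_eq_abs, abs_of_pos (by positivity : (0:ℝ) < u⁻¹)] at h1
  rw [le_div_iff₀ hε]
  calc u * ε ≤ u * (u⁻¹ * ‖v‖) := by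
        exact mul_le_mul_of_nonneg_left h1 hu0.le
    _ = ‖v‖ := by field_simp

lemma MemR.mem_smul_down (hA : MemR A) {u u' : ℝ} (hu' : 0 < u') (huu : u' ≤ u)
    {v : Fin d → ℝ} (hv : v ∈ u • A) : v ∈ u' • A := by
  have hu : 0 < u := lt_of_lt_of_le hu' huu
  rw [mem_smul' hu.ne'] at hv
  rw [mem_smul' hu'.ne']
  have ht : (1:ℝ) ≤ u / u' := (one_le_div hu').mpr huu
  have := hA.scale_mem hv ht
  rwa [smul_smul, show u / u' * u⁻¹ = u'⁻¹ by field_simp] at this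

lemma gA_nonneg (v : Fin d → ℝ) : 0 ≤ gA A v :=
  Real.sSup_nonneg (fun _ hu => hu.1.le)

lemma gA_nonempty_of_pos {v : Fin d → ℝ} (h : 0 < gA A v) :
    {u : ℝ | 0 < u ∧ v ∈ u • A}.Nonempty := by
  by_contra hc
  rw [Set.not_nonempty_iff_eq_empty] at hc
  have : gA A v = 0 := by rw [gA, hc, Real.sSup_empty]
  linarith

lemma lt_gA_iff (hA : MemR A) {v : Fin d → ℝ} {x : ℝ} (hx : 0 < x) :
    x < gA A v ↔ v ∈ x • A := by
  constructor
  · intro h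
    obtain ⟨u, hu, hxu⟩ := exists_lt_of_lt_csSup (gA_nonempty_of_pos (hx.trans h)) h
    exact hA.mem_smul_down hx hxu.le hu.2
  · intro hv
    rw [mem_smul' hx.ne'] at hv
    set a := x⁻¹ • v with hadef
    have hop : IsOpen {t : ℝ | t • a ∈ A} :=
      hA.1.preimage (continuous_id.smul continuous_const)
    obtain ⟨δ, hδ, hball⟩ := Metric.isOpen_iff.mp hop 1 (by simpa using hv)
    obtain ⟨ε, hε0, hε1, hεδ⟩ : ∃ ε : ℝ, 0 < ε ∧ ε ≤ 1 ∧ ε < δ :=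
      ⟨min δ 1 / 2, by positivity, by
        have := min_le_right δ 1; linarith, by
        have := min_le_left δ 1; linarith⟩
    have ht0 : (0:ℝ) < 1 - ε / 2 := by linarith
    have ht1 : 1 - ε / 2 < 1 := by linarith
    have hta : (1 - ε / 2) • a ∈ A := hball (by
      simp only [Metric.mem_ball, Real.dist_eq]
      rw [abs_of_nonpos (by linarith)]
      linarith)
    have hmem : x / (1 - ε / 2) ∈ {u : ℝ | 0 < u ∧ v ∈ u • A} := by
      refine ⟨by positivity, ?_⟩
      have heq : (x / (1 - ε / 2))⁻¹ • v = (1 - ε / 2) • (x⁻¹ • v) := by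
        rw [smul_smul]; congr 1; field_simp
      rw [mem_smul' (by positivity : x / (1 - ε / 2) ≠ 0), heq]
      exact hta
    have hlt : x < x / (1 - ε / 2) := by
      rw [lt_div_iff₀ ht0]
      calc x * (1 - ε / 2) < x * 1 := mul_lt_mul_of_pos_left ht1 hx
        _ = x := mul_one x
    exact lt_of_lt_of_le hlt (le_csSup (hA.bddAbove v) hmem)

lemma gA_add_le (hA : MemR A) (v w : Fin d → ℝ) : gA A (v + w) ≤ gA A v + gA A w := by
  by_contra hcon
  push_neg at hcon
  have hpos : 0 < gA A (v + w) :=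
    lt_of_le_of_lt (add_nonneg (gA_nonneg v) (gA_nonneg w)) hcon
  obtain ⟨u, hu, hgu⟩ := exists_lt_of_lt_csSup (gA_nonempty_of_pos hpos) hcon
  have hu0 : 0 < u := hu.1
  set δ := (u - gA A v - gA A w) / 2 with hδdef
  have hδ : 0 < δ := by simp only [hδdef]; linarith
  set u₁ := gA A v + δ with hu₁def
  set u₂ := gA A w + δ with hu₂def
  have hu₁ : 0 < u₁ := lt_of_lt_of_le hδ (by simp only [hu₁def]; linarith [gA_nonneg (A := A) v])
  have hu₂ : 0 < u₂ := lt_of_lt_of_le hδ (by simp only [hu₂def]; linarith [gA_nonneg (A := A) w])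
  have hsum : u₁ + u₂ = u := by simp only [hu₁def, hu₂def, hδdef]; ring
  have hv : v ∉ u₁ • A := by
    intro hmem
    have : u₁ ≤ gA A v := le_csSup (hA.bddAbove v) ⟨hu₁, hmem⟩
    simp only [hu₁def] at this; linarith
  have hw : w ∉ u₂ • A := by
    intro hmem
    have : u₂ ≤ gA A w := le_csSup (hA.bddAbove w) ⟨hu₂, hmem⟩
    simp only [hu₂def] at this; linarith
  have hv' : u₁⁻¹ • v ∈ Aᶜ := fun h => hv ((mem_smul' hu₁.ne').mpr h)
  have hw' : u₂⁻¹ • w ∈ Aᶜ := fun h => hw ((mem_smul' hu₂.ne').mpr h)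
  have hb : u⁻¹ • (v + w) ∈ A := (mem_smul' hu0.ne').mp hu.2
  have hcomb := hA.2.2.1 hv' hw' (by positivity : (0:ℝ) ≤ u₁ / u)
    (by positivity : (0:ℝ) ≤ u₂ / u) (by rw [← add_div, hsum, div_self hu0.ne'])
  rw [smul_smul, smul_smul] at hcomb
  have e1 : u₁ / u * u₁⁻¹ = u⁻¹ := by field_simp
  have e2 : u₂ / u * u₂⁻¹ = u⁻¹ := by field_simp
  rw [e1, e2, ← smul_add] at hcomb
  exact hcomb hb

lemma gA_le_add_right (hA : MemR A) (v w : Fin d → ℝ) (hw : ∀ i, 0 ≤ w i) :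
    gA A v ≤ gA A (v + w) := by
  rcases Set.eq_empty_or_nonempty {u : ℝ | 0 < u ∧ v ∈ u • A} with he | hne
  · have : gA A v = 0 := by rw [gA, he, Real.sSup_empty]
    rw [this]; exact gA_nonneg _
  · refine csSup_le hne (fun u hu => ?_)
    obtain ⟨hu0, hmem⟩ := hu
    rw [mem_smul' hu0.ne'] at hmem
    have haw : u⁻¹ • v + u⁻¹ • w ∈ A := by
      refine hA.2.1 _ hmem _ (fun i => ?_)
      have := hw i
      simp only [Pi.smul_apply, smul_eq_mul]
      positivity
    have : v + w ∈ u • A := by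
      rw [mem_smul' hu0.ne', smul_add]
      exact haw
    exact le_csSup (hA.bddAbove _) ⟨hu0, this⟩

lemma measurable_gA (hA : MemR A) : Measurable (gA A) := by
  apply measurable_of_Ioi
  intro x
  rcases lt_trichotomy x 0 with hx | hx | hx
  · have : gA A ⁻¹' Set.Ioi x = Set.univ := by
      ext v; simp only [Set.mem_preimage, Set.mem_Ioi, Set.mem_univ, iff_true]
      exact lt_of_lt_of_le hx (gA_nonneg v)
    rw [this]; exact MeasurableSet.univ
  · subst hx
    have : gA A ⁻¹' Set.Ioi 0 = ⋃ n : ℕ, ((n + 1 : ℝ)⁻¹ • A) := by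
      ext v
      simp only [Set.mem_preimage, Set.mem_Ioi, Set.mem_iUnion]
      constructor
      · intro h
        obtain ⟨u, hu0, humem⟩ := gA_nonempty_of_pos h
        obtain ⟨n, hn⟩ := exists_nat_gt u⁻¹
        refine ⟨n, hA.mem_smul_down (by positivity) ?_ humem⟩
        rw [inv_le_comm₀ (by positivity) hu0]
        exact le_of_lt (lt_of_lt_of_le hn (by linarith [Nat.cast_nonneg (α := ℝ) n]))
      · intro ⟨n, hn⟩
        have hpos : (0:ℝ) < (n + 1 : ℝ)⁻¹ := by positivity
        exact lt_of_lt_of_le hpos (le_csSup (hA.bddAbove v) ⟨hpos, hn⟩)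
    rw [this]
    exact MeasurableSet.iUnion (fun n => (hA.1.smul₀ (by positivity)).measurableSet
      )
  · have : gA A ⁻¹' Set.Ioi x = x • A := by
      ext v; simp only [Set.mem_preimage, Set.mem_Ioi]
      exact lt_gA_iff hA hx
    rw [this]
    exact (hA.1.smul₀ hx.ne').measurableSet

end Geometry

section Analysis
variable {V W : ℝ → ℝ}

lemma intervalIntegrable_tail_prod (hV : Antitone V) (hW : Antitone W)
    (hVpos : ∀ z, 0 ≤ V z) (hWpos : ∀ z, 0 ≤ W z) (x a b : ℝ) :
    IntervalIntegrable (fun y => V (x - y) * W y) volume a b := by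
  have hmeas : Measurable fun y => V (x - y) * W y :=
    ((hV.measurable).comp (measurable_const.sub measurable_id)).mul hW.measurable
  rw [intervalIntegrable_iff]
  have hfin : volume (Set.uIoc a b) ≠ ⊤ := by rw [Set.uIoc]; exact measure_Ioc_lt_top.ne
  apply Measure.integrableOn_of_bounded hfin hmeas.aestronglyMeasurable
    (M := V (x - max a b) * W (min a b))
  filter_upwards [ae_restrict_mem measurableSet_uIoc] with y hy
  have h1 : min a b ≤ y := le_of_lt (by simpa using hy.1)
  have h2 : y ≤ max a b := by simpa using hy.2
  rw [Real.norm_eq_abs, abs_of_nonneg (mul_nonneg (hVpos _) (hWpos _))]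
  exact mul_le_mul (hV (by linarith)) (hW h1) (hWpos _) (hVpos _)

lemma integral_tail_symm (V : ℝ → ℝ) (x h : ℝ) :
    (∫ y in (x - h)..x, V (x - y) * V y) = ∫ y in (0:ℝ)..h, V (x - y) * V y := by
  have key := intervalIntegral.integral_comp_sub_left (a := (0:ℝ)) (b := h)
    (fun z => V z * V (x - z)) x
  simp only [sub_sub_cancel, sub_zero] at key
  rw [key]
  exact intervalIntegral.integral_congr fun y _ => mul_comm _ _

lemma integral_tail_split (hV : Antitone V) (hVpos : ∀ z, 0 ≤ V z) {x h : ℝ}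
    (h0 : 0 ≤ h) (hx : 2 * h ≤ x) :
    (∫ y in (0:ℝ)..x, V (x - y) * V y) =
      2 * (∫ y in (0:ℝ)..h, V (x - y) * V y) + ∫ y in h..(x - h), V (x - y) * V y := by
  have i1 := intervalIntegrable_tail_prod hV hV hVpos hVpos x 0 h
  have i2 := intervalIntegrable_tail_prod hV hV hVpos hVpos x h (x - h)
  have i3 := intervalIntegrable_tail_prod hV hV hVpos hVpos x (x - h) x
  have e1 := intervalIntegral.integral_add_adjacent_intervals i1 i2
  have e2 := intervalIntegral.integral_add_adjacent_intervals (i1.trans i2) i3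
  rw [← e2, ← e1, integral_tail_symm V x h]
  ring

lemma integral_tail_lower (hV : Antitone V) (hVpos : ∀ z, 0 ≤ V z) {a b : ℝ} (hab : a ≤ b)
    (ha : 0 ≤ a) (x : ℝ) (c : ℝ) (hc : 0 ≤ c) (hcV : ∀ y ∈ Set.Icc a b, c ≤ V (x - y)) :
    c * (∫ y in a..b, V y) ≤ ∫ y in a..b, V (x - y) * V y := by
  rw [← intervalIntegral.integral_const_mul]
  apply intervalIntegral.integral_mono_on hab
    (hV.intervalIntegrable.const_mul c)
    (intervalIntegrable_tail_prod hV hV hVpos hVpos x a b)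
  intro y hy
  exact mul_le_mul_of_nonneg_right (hcV y hy) (hVpos _)

lemma integral_tail_upper (hV : Antitone V) (hVpos : ∀ z, 0 ≤ V z) {a b : ℝ} (hab : a ≤ b)
    (x : ℝ) (c : ℝ) (hcV : ∀ y ∈ Set.Icc a b, V (x - y) ≤ c) :
    (∫ y in a..b, V (x - y) * V y) ≤ c * ∫ y in a..b, V y := by
  rw [← intervalIntegral.integral_const_mul]
  apply intervalIntegral.integral_mono_on hab
    (intervalIntegrable_tail_prod hV hV hVpos hVpos x a b)
    (hV.intervalIntegrable.const_mul c)
  intro y hy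
  exact mul_le_mul_of_nonneg_right (hcV y hy) (hVpos _)

lemma tendsto_ratio_one {f g : ℝ → ℝ} (hg : ∀ x, 0 < g x)
    (h1 : ∀ ε > (0:ℝ), ∀ᶠ x in atTop, f x ≤ (1 + ε) * g x)
    (h2 : ∀ ε > (0:ℝ), ∀ᶠ x in atTop, (1 - ε) * g x ≤ f x) :
    Tendsto (fun x => f x / g x) atTop (nhds 1) := by
  rw [Metric.tendsto_nhds]
  intro ε hε
  filter_upwards [h1 (ε/2) (by linarith), h2 (ε/2) (by linarith)] with x hx1 hx2
  rw [Real.dist_eq, abs_lt]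
  have ha := (le_div_iff₀ (hg x)).mpr hx2
  have hb := (div_le_iff₀ (hg x)).mpr hx1
  constructor <;> linarith


lemma pos_tail_integral (hV : Antitone V) (hVpos : ∀ z, 0 < V z)
    (hint : IntegrableOn V (Set.Ioi 0) volume) {a : ℝ} (ha : 0 < a) :
    0 < ∫ y in Set.Ioi a, V y := by
  have hsub : IntegrableOn V (Set.Ioi a) volume := hint.mono_set (Set.Ioi_subset_Ioi ha.le)
  have h1 : (∫ y in Set.Ioc a (a+1), (V (a+1) : ℝ)) ≤ ∫ y in Set.Ioc a (a+1), V y := by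
    apply setIntegral_mono_on (integrableOn_const measure_Ioc_lt_top.ne)
      (hsub.mono_set Set.Ioc_subset_Ioi_self) measurableSet_Ioc
    exact fun y hy => hV hy.2
  have h2 : (∫ y in Set.Ioc a (a+1), (V (a+1) : ℝ)) = V (a+1) := by
    simp [Real.volume_Ioc]
  have h3 : (∫ y in Set.Ioc a (a+1), V y) ≤ ∫ y in Set.Ioi a, V y := by
    apply setIntegral_mono_set hsub
    · filter_upwards with y using (hVpos y).le
    · exact HasSubset.Subset.eventuallyLE Set.Ioc_subset_Ioi_self
  have := hVpos (a+1)
  linarith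

lemma tailMean_split (hint : IntegrableOn V (Set.Ioi 0) volume) {a : ℝ} (ha : 0 < a) :
    tailMean V = (∫ y in (0:ℝ)..a, V y) + ∫ y in Set.Ioi a, V y := by
  rw [tailMean, ← Set.Ioc_union_Ioi_eq_Ioi ha.le,
    setIntegral_union (Set.Ioc_disjoint_Ioi le_rfl) measurableSet_Ioi
      (hint.mono_set (by rw [← Set.Ioc_union_Ioi_eq_Ioi ha.le]; exact Set.subset_union_left))
      (hint.mono_set (by rw [← Set.Ioc_union_Ioi_eq_Ioi ha.le]; exact Set.subset_union_right)),
    intervalIntegral.integral_of_le ha.le]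

lemma sstar_longtailed (hV : Antitone V) (hS : StrongSubexpFun V) :
    ∀ a > (0:ℝ), Tendsto (fun x => V (x - a) / V x) atTop (nhds 1) := by
  obtain ⟨hpos, hint, hlim⟩ := hS
  intro a ha
  have hVpos' : ∀ z, 0 ≤ V z := fun z => (hpos z).le
  apply tendsto_ratio_one hpos
  · intro ε hε
    by_contra hcon
    rw [Filter.not_eventually] at hcon
    have hμapos : 0 < ∫ y in Set.Ioi a, V y := pos_tail_integral hV hpos hint ha
    set μa := ∫ y in Set.Ioi a, V y with hμadef
    set c := ∫ y in (0:ℝ)..a, V y with hcdef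
    have hμ : tailMean V = c + μa := tailMean_split hint ha
    set s := ε * μa / (4 * (1 + ε)) with hsdef
    have hspos : 0 < s := by
      apply div_pos (by positivity); positivity
    have E1 : ∀ᶠ x in atTop,
        (∫ y in (0:ℝ)..x, V (x - y) * V y) / V x < 2 * tailMean V + ε * μa :=
      hlim.eventually_lt_const (by nlinarith)
    have E2 : Tendsto (fun x : ℝ => ∫ y in a..(x/2), V y) atTop (nhds μa) := by
      have h1 : Tendsto (fun t : ℝ => ∫ y in a..t, V y) atTop (nhds μa) :=
        intervalIntegral_tendsto_integral_Ioi a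
          (hint.mono_set (Set.Ioi_subset_Ioi ha.le)) tendsto_id
      exact h1.comp (Tendsto.atTop_div_const two_pos tendsto_id)
    have E2' : ∀ᶠ x in atTop, μa - s < ∫ y in a..(x/2), V y :=
      E2.eventually_const_lt (by linarith)
    have E3 : ∀ᶠ x in atTop, 2 * a ≤ x := eventually_ge_atTop _
    obtain ⟨x, hbad, hE1, hE2, hE3⟩ := (hcon.and_eventually (E1.and (E2'.and E3))).exists
    push_neg at hbad
    have hax : a ≤ x / 2 := by linarith
    have hsym := integral_tail_symm V x (x/2)
    rw [show x - x/2 = x/2 by ring] at hsym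
    have hsplit : (∫ y in (0:ℝ)..x, V (x - y) * V y)
        = 2 * ∫ y in (0:ℝ)..(x/2), V (x - y) * V y := by
      have i1 := intervalIntegrable_tail_prod hV hV hVpos' hVpos' x 0 (x/2)
      have i2 := intervalIntegrable_tail_prod hV hV hVpos' hVpos' x (x/2) x
      rw [← intervalIntegral.integral_add_adjacent_intervals i1 i2, hsym]
      ring
    have hsplit2 : (∫ y in (0:ℝ)..(x/2), V (x - y) * V y)
        = (∫ y in (0:ℝ)..a, V (x - y) * V y) + ∫ y in a..(x/2), V (x - y) * V y := by
      have i1 := intervalIntegrable_tail_prod hV hV hVpos' hVpos' x 0 a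
      have i2 := intervalIntegrable_tail_prod hV hV hVpos' hVpos' x a (x/2)
      rw [intervalIntegral.integral_add_adjacent_intervals i1 i2]
    have lowA : V x * c ≤ ∫ y in (0:ℝ)..a, V (x - y) * V y := by
      apply integral_tail_lower hV hVpos' ha.le le_rfl x (V x) (hVpos' x)
      intro y hy
      exact hV (by linarith [hy.1])
    have lowB : ((1 + ε) * V x) * (∫ y in a..(x/2), V y)
        ≤ ∫ y in a..(x/2), V (x - y) * V y := by
      apply integral_tail_lower hV hVpos' hax ha.le x _ (mul_nonneg (by linarith) (hVpos' x))
      intro y hy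
      have h1 : x - y ≤ x - a := by linarith [hy.1]
      exact le_trans hbad.le (hV h1)
    have hIx : 2 * tailMean V + ε * μa
        ≤ (∫ y in (0:ℝ)..x, V (x - y) * V y) / V x := by
      rw [le_div_iff₀ (hpos x), hsplit, hsplit2]
      have hm : μa - s ≤ ∫ y in a..(x/2), V y := hE2.le
      have h2 : ((1 + ε) * V x) * (μa - s) ≤ ((1 + ε) * V x) * (∫ y in a..(x/2), V y) :=
        mul_le_mul_of_nonneg_left hm (mul_nonneg (by linarith) (hVpos' x))
      have hs2 : 2 * ((1 + ε) * s) = ε * μa / 2 := by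
        rw [hsdef]; field_simp; ring
      have hs3 : 2 * ((1 + ε) * s) * V x = ε * μa / 2 * V x := by rw [hs2]
      have hμx : tailMean V * V x = c * V x + μa * V x := by rw [hμ]; ring
      have h2' : ((1 + ε) * V x) * (μa - s) ≤ ∫ y in a..(x/2), V (x - y) * V y :=
        h2.trans lowB
      nlinarith [hs3, hμx, mul_nonneg (mul_nonneg hε.le hμapos.le) (hVpos' x), lowA, h2']
    linarith
  · intro ε hε
    filter_upwards [eventually_ge_atTop a] with x _
    have h1 := hV (show x - a ≤ x by linarith)
    nlinarith [hpos x]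

lemma sstar_unif_small (hV : Antitone V) (hS : StrongSubexpFun V) {ε : ℝ} (hε : 0 < ε) :
    ∃ h₀ : ℝ, 1 ≤ h₀ ∧ ∀ h, h₀ ≤ h → ∀ᶠ x in atTop,
      (∫ y in h..(x - h), V (x - y) * V y) ≤ ε * V x := by
  obtain ⟨hpos, hint, hlim⟩ := hS
  have hVpos' : ∀ z, 0 ≤ V z := fun z => (hpos z).le
  have htend : Tendsto (fun t : ℝ => ∫ y in (0:ℝ)..t, V y) atTop (nhds (tailMean V)) :=
    intervalIntegral_tendsto_integral_Ioi 0 hint tendsto_id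
  have hev : ∀ᶠ t in atTop, tailMean V - ε/4 < ∫ y in (0:ℝ)..t, V y :=
    htend.eventually_const_lt (by linarith)
  rw [eventually_atTop] at hev
  obtain ⟨h₀', hh⟩ := hev
  refine ⟨max h₀' 1, le_max_right _ _, fun h hh₀ => ?_⟩
  have hh1 : (1:ℝ) ≤ h := le_trans (le_max_right _ _) hh₀
  have hIh : tailMean V - ε/4 < ∫ y in (0:ℝ)..h, V y :=
    hh h (le_trans (le_max_left _ _) hh₀)
  have E1 : ∀ᶠ x in atTop,
      (∫ y in (0:ℝ)..x, V (x - y) * V y) / V x < 2 * tailMean V + ε/2 :=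
    hlim.eventually_lt_const (by linarith)
  filter_upwards [eventually_ge_atTop (2*h), E1] with x hx hE1
  have hsplit := integral_tail_split hV hVpos' (by linarith : (0:ℝ) ≤ h) hx
  have hlow : V x * (∫ y in (0:ℝ)..h, V y) ≤ ∫ y in (0:ℝ)..h, V (x - y) * V y := by
    apply integral_tail_lower hV hVpos' (by linarith) le_rfl x (V x) (hVpos' x)
    intro y hy
    exact hV (by linarith [hy.1])
  have hE1' : (∫ y in (0:ℝ)..x, V (x - y) * V y) < (2 * tailMean V + ε/2) * V x :=
    (div_lt_iff₀ (hpos x)).mp hE1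
  nlinarith [hpos x, mul_le_mul_of_nonneg_left hIh.le (hVpos' x)]

lemma ratio_event {a ε : ℝ} (hpos : ∀ x, 0 < V x)
    (hlt : Tendsto (fun x => V (x - a) / V x) atTop (nhds 1)) (hε : 0 < ε) :
    ∀ᶠ x in atTop, V (x - a) ≤ (1 + ε) * V x := by
  filter_upwards [hlt.eventually_lt_const (lt_add_of_pos_right 1 hε)] with x hx
  exact ((div_lt_iff₀ (hpos x)).mp hx).le

lemma sstar_of_tail_equiv (hV : Antitone V) (hSV : StrongSubexpFun V) (hW : Antitone W)
    (hWpos : ∀ x, 0 < W x) (hequiv : Tendsto (fun x => W x / V x) atTop (nhds 1)) :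
    StrongSubexpFun W := by
  have hVpos : ∀ x, 0 < V x := hSV.1
  have hVnn : ∀ x, 0 ≤ V x := fun x => (hVpos x).le
  have hWnn : ∀ x, 0 ≤ W x := fun x => (hWpos x).le
  have hWV2 : ∀ᶠ x in atTop, W x ≤ 2 * V x := by
    filter_upwards [hequiv.eventually_lt_const one_lt_two] with x hx
    exact ((div_lt_iff₀ (hVpos x)).mp hx).le
  have hVW2 : ∀ᶠ x in atTop, V x ≤ 2 * W x := by
    filter_upwards [hequiv.eventually_const_lt (by norm_num : (1:ℝ)/2 < 1)] with x hx
    have := (lt_div_iff₀ (hVpos x)).mp hx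
    linarith
  -- integrability of W on Ioi 0
  have hWint : IntegrableOn W (Set.Ioi 0) volume := by
    obtain ⟨M, hM⟩ := eventually_atTop.mp hWV2
    have hM1 : (0:ℝ) < max M 1 := lt_of_lt_of_le one_pos (le_max_right _ _)
    have h1 : IntegrableOn W (Set.Ioc 0 (max M 1)) volume := by
      apply Measure.integrableOn_of_bounded measure_Ioc_lt_top.ne
        hW.measurable.aestronglyMeasurable (M := W 0)
      filter_upwards [ae_restrict_mem measurableSet_Ioc] with y hy
      rw [Real.norm_eq_abs, abs_of_nonneg (hWnn y)]
      exact hW hy.1.le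
    have h2 : IntegrableOn W (Set.Ioi (max M 1)) volume := by
      apply Integrable.mono ((hSV.2.1.mono_set (Set.Ioi_subset_Ioi hM1.le)).const_mul 2)
        hW.measurable.aestronglyMeasurable.restrict
      filter_upwards [ae_restrict_mem measurableSet_Ioi] with y hy
      rw [Real.norm_eq_abs, Real.norm_eq_abs, abs_of_nonneg (hWnn y),
        abs_of_nonneg (by linarith [hVnn y] : (0:ℝ) ≤ 2 * V y)]
      exact hM y (le_trans (le_max_left _ _) (le_of_lt hy))
    have := h1.union h2
    rwa [Set.Ioc_union_Ioi_eq_Ioi hM1.le] at this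
  -- W is long-tailed
  have hVL := sstar_longtailed hV hSV
  have hWL : ∀ a > (0:ℝ), Tendsto (fun x => W (x - a) / W x) atTop (nhds 1) := by
    intro a ha
    have h1 : Tendsto (fun x => W (x - a) / V (x - a)) atTop (nhds 1) := by
      have := hequiv.comp (tendsto_atTop_add_const_right atTop (-a) tendsto_id)
      simpa [Function.comp_def, sub_eq_add_neg] using this
    have h3 : Tendsto (fun x => V x / W x) atTop (nhds 1) := by
      have := hequiv.inv₀ one_ne_zero
      simp only [inv_div, inv_one] at this
      exact this
    have hprod := h1.mul ((hVL a ha).mul h3)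
    rw [show (1:ℝ) * (1 * 1) = 1 by norm_num] at hprod
    apply hprod.congr
    intro x
    calc W (x - a) / V (x - a) * (V (x - a) / V x * (V x / W x))
        = W (x - a) * (V (x - a) / V (x - a)) * (V x / V x) / W x := by ring
      _ = W (x - a) / W x := by
          rw [div_self (hVpos (x - a)).ne', div_self (hVpos x).ne', mul_one, mul_one]
  refine ⟨hWpos, hWint, ?_⟩
  rw [Metric.tendsto_nhds]
  intro ε hε
  have hμWnn : 0 ≤ tailMean W := setIntegral_nonneg measurableSet_Ioi (fun y _ => hWnn y)
  set μW := tailMean W with hμWdef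
  obtain ⟨h₀, hh₀1, hh₀⟩ := sstar_unif_small hV hSV (show (0:ℝ) < ε/32 by linarith)
  have hWtend : Tendsto (fun t : ℝ => ∫ y in (0:ℝ)..t, W y) atTop (nhds μW) :=
    intervalIntegral_tendsto_integral_Ioi 0 hWint tendsto_id
  have hWev : ∀ᶠ t in atTop, μW - ε/8 < ∫ y in (0:ℝ)..t, W y :=
    hWtend.eventually_const_lt (by linarith)
  obtain ⟨M₁, hM₁⟩ := eventually_atTop.mp (hWV2.and hVW2)
  obtain ⟨h, hfacts⟩ := ((hWev.and (eventually_ge_atTop h₀)).and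
    ((eventually_ge_atTop M₁).and (eventually_ge_atTop (1:ℝ)))).exists
  obtain ⟨⟨hIW, hge0⟩, hgeM, hge1⟩ := hfacts
  set γ := ε / (8 * (μW + 1)) with hγdef
  have hμ1 : (0:ℝ) < μW + 1 := by linarith
  have hγpos : 0 < γ := by
    apply div_pos hε; nlinarith
  have hγμ : 2 * γ * μW ≤ ε / 4 := by
    have key : 2 * γ * μW = ε * (μW / (4 * (μW + 1))) := by
      rw [hγdef]; field_simp; ring
    have key2 : μW / (4 * (μW + 1)) ≤ 1/4 := by
      rw [div_le_div_iff₀ (by positivity) (by norm_num : (0:ℝ) < 4)]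
      linarith
    calc 2 * γ * μW = ε * (μW / (4 * (μW + 1))) := key
      _ ≤ ε * (1/4) := mul_le_mul_of_nonneg_left key2 hε.le
      _ = ε / 4 := by ring
  have hWLh := ratio_event hWpos (hWL h (lt_of_lt_of_le one_pos hge1)) hγpos
  have hIhW_le : (∫ y in (0:ℝ)..h, W y) ≤ μW := by
    rw [intervalIntegral.integral_of_le (by linarith : (0:ℝ) ≤ h), hμWdef, tailMean]
    apply setIntegral_mono_set hWint
    · filter_upwards with y using hWnn y
    · exact HasSubset.Subset.eventuallyLE Set.Ioc_subset_Ioi_self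
  filter_upwards [eventually_ge_atTop (2*h), hh₀ h hge0, hWLh, hVW2,
    eventually_ge_atTop (M₁ + h)] with x hx2 hsmall hWLhx hVWx hxM₁
  have hh0 : (0:ℝ) ≤ h := by linarith
  have hsplitW := integral_tail_split hW hWnn hh0 hx2
  have hAup : (∫ y in (0:ℝ)..h, W (x - y) * W y) ≤ W (x - h) * ∫ y in (0:ℝ)..h, W y :=
    integral_tail_upper hW hWnn hh0 x (W (x - h)) (fun y hy => hW (by linarith [hy.2]))
  have hAlo : W x * (∫ y in (0:ℝ)..h, W y) ≤ ∫ y in (0:ℝ)..h, W (x - y) * W y := by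
    apply integral_tail_lower hW hWnn hh0 le_rfl x (W x) (hWnn x)
    exact fun y hy => hW (by linarith [hy.1])
  have hBup : (∫ y in h..(x - h), W (x - y) * W y)
      ≤ 4 * ∫ y in h..(x - h), V (x - y) * V y := by
    rw [← intervalIntegral.integral_const_mul]
    apply intervalIntegral.integral_mono_on (by linarith : h ≤ x - h)
      (intervalIntegrable_tail_prod hW hW hWnn hWnn x h (x - h))
      ((intervalIntegrable_tail_prod hV hV hVnn hVnn x h (x - h)).const_mul 4)
    intro y hy
    have hy1 : M₁ ≤ y := le_trans hgeM hy.1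
    have hy2 : M₁ ≤ x - y := by
      have := hy.2; linarith [hgeM]
    have w1 := (hM₁ y hy1).1
    have w2 := (hM₁ (x - y) hy2).1
    calc W (x - y) * W y ≤ (2 * V (x - y)) * (2 * V y) :=
          mul_le_mul w2 w1 (hWnn y) (by linarith [hVnn (x - y)])
      _ = 4 * (V (x - y) * V y) := by ring
  have hBnn : 0 ≤ ∫ y in h..(x - h), W (x - y) * W y := by
    apply intervalIntegral.integral_nonneg (by linarith : h ≤ x - h)
    exact fun y _ => mul_nonneg (hWnn _) (hWnn _)
  have hVx2W : V x ≤ 2 * W x := (hM₁ x (by linarith)).2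
  have hB : (∫ y in h..(x - h), W (x - y) * W y) ≤ ε/4 * W x := by
    have c1 : (4:ℝ) * ∫ y in h..(x - h), V (x - y) * V y ≤ 4 * (ε/32 * V x) := by
      linarith [hsmall]
    calc (∫ y in h..(x - h), W (x - y) * W y) ≤ 4 * (ε/32 * V x) := le_trans hBup c1
      _ = ε/8 * V x := by ring
      _ ≤ ε/8 * (2 * W x) := by
          apply mul_le_mul_of_nonneg_left hVx2W (by linarith)
      _ = ε/4 * W x := by ring
  have hA2 : (∫ y in (0:ℝ)..h, W (x - y) * W y) ≤ (1 + γ) * W x * μW := by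
    calc (∫ y in (0:ℝ)..h, W (x - y) * W y) ≤ W (x - h) * ∫ y in (0:ℝ)..h, W y := hAup
      _ ≤ ((1 + γ) * W x) * ∫ y in (0:ℝ)..h, W y := by
          apply mul_le_mul_of_nonneg_right hWLhx
          apply intervalIntegral.integral_nonneg hh0 (fun y _ => hWnn y)
      _ ≤ ((1 + γ) * W x) * μW := by
          apply mul_le_mul_of_nonneg_left hIhW_le
          have := hWpos x; nlinarith
      _ = (1 + γ) * W x * μW := by ring
  rw [Real.dist_eq, abs_lt]
  have hWx := hWpos x
  constructor
  · have l1 : W x * (μW - ε/8) < W x * (∫ y in (0:ℝ)..h, W y) :=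
      mul_lt_mul_of_pos_left hIW hWx
    rw [lt_sub_iff_add_lt, lt_div_iff₀ hWx, hsplitW]
    nlinarith [hAlo, hBnn, mul_pos hε hWx]
  · rw [sub_lt_iff_lt_add, div_lt_iff₀ hWx, hsplitW]
    nlinarith [hA2, hB, mul_le_mul_of_nonneg_right hγμ (hWnn x), mul_pos hε hWx]

end Analysis

noncomputable def tailF {Ω : Type*} [MeasurableSpace Ω] (P : Measure Ω) (Z : Ω → ℝ) (x : ℝ) : ℝ :=
  (P {ω | x < Z ω}).toReal

section Prob
variable {Ω : Type*} [MeasurableSpace Ω] (P : Measure Ω) [IsProbabilityMeasure P]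

lemma tailF_antitone (Z : Ω → ℝ) : Antitone (tailF P Z) := by
  intro x y hxy
  exact ENNReal.toReal_mono (measure_ne_top _ _)
    (measure_mono (fun ω hω => lt_of_le_of_lt hxy hω))

lemma tailF_nonneg (Z : Ω → ℝ) (x : ℝ) : 0 ≤ tailF P Z x := ENNReal.toReal_nonneg

lemma tailF_mono_fun {Z₁ Z₂ : Ω → ℝ} (h : ∀ ω, Z₁ ω ≤ Z₂ ω) (x : ℝ) :
    tailF P Z₁ x ≤ tailF P Z₂ x :=
  ENNReal.toReal_mono (measure_ne_top _ _)
    (measure_mono (fun ω hω => lt_of_lt_of_le hω (h ω)))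

lemma tailF_tendsto_zero {Z : Ω → ℝ} (mZ : Measurable Z) :
    Tendsto (tailF P Z) atTop (nhds 0) := by
  have hanti := tailF_antitone P Z
  have hnat : Tendsto (fun n : ℕ => tailF P Z n) atTop (nhds 0) := by
    have h0 : Tendsto (fun n : ℕ => P {ω | (n:ℝ) < Z ω}) atTop
        (nhds (P (⋂ n : ℕ, {ω | (n:ℝ) < Z ω}))) := by
      have := tendsto_measure_iInter_atTop (μ := P) (s := fun n : ℕ => {ω | (n:ℝ) < Z ω})
        (fun n => (mZ measurableSet_Ioi).nullMeasurableSet)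
        (fun m n hmn ω hω => lt_of_le_of_lt (Nat.cast_le.mpr hmn : (m:ℝ) ≤ n) hω)
        ⟨0, measure_ne_top _ _⟩
      exact this
    have hempty : (⋂ n : ℕ, {ω | (n:ℝ) < Z ω}) = ∅ := by
      ext ω
      simp only [Set.mem_iInter, Set.mem_setOf_eq, Set.mem_empty_iff_false, iff_false, not_forall,
        not_lt]
      obtain ⟨n, hn⟩ := exists_nat_gt (Z ω)
      exact ⟨n, hn.le⟩
    rw [hempty, measure_empty] at h0
    have h1 : Tendsto (fun n : ℕ => (P {ω | (n:ℝ) < Z ω}).toReal) atTop (nhds 0) := by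
      have := (ENNReal.tendsto_toReal (by simp : (0:ENNReal) ≠ ⊤)).comp h0
      simpa [Function.comp_def] using this
    exact h1
  rw [Metric.tendsto_nhds]
  intro ε hε
  obtain ⟨n, hn⟩ := eventually_atTop.mp ((Metric.tendsto_nhds.mp hnat) ε hε)
  filter_upwards [eventually_ge_atTop ((n:ℝ))] with x hx
  have h1 : tailF P Z x ≤ tailF P Z n := hanti hx
  have h2 := hn n le_rfl
  rw [Real.dist_eq] at h2 ⊢
  rw [sub_zero] at h2 ⊢
  rw [abs_of_nonneg (tailF_nonneg P Z _)] at h2 ⊢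
  exact lt_of_le_of_lt h1 h2

lemma conv_upper_bound {Y₁ Y₂ : Ω → ℝ}
    (mY₁ : Measurable Y₁) (mY₂ : Measurable Y₂) (hindep : IndepFun Y₁ Y₂ P)
    {V : ℝ → ℝ} (hVanti : Antitone V) (hSV : StrongSubexpFun V)
    (hG₁V : ∀ x, tailF P Y₁ x ≤ V x) (hG₂V : ∀ x, tailF P Y₂ x ≤ V x)
    {ε : ℝ} (hε : 0 < ε) :
    ∃ h : ℝ, 1 ≤ h ∧ ∀ᶠ x in atTop,
      tailF P (fun ω => Y₁ ω + Y₂ ω) x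
        ≤ tailF P Y₁ (x - h) + tailF P Y₂ (x - h) + ε * V x := by
  have hVpos := hSV.1
  have hVnn : ∀ z, 0 ≤ V z := fun z => (hVpos z).le
  obtain ⟨z₀, hz₀⟩ := eventually_atTop.mp
    (ratio_event hVpos (sstar_longtailed hVanti hSV 1 one_pos) one_pos)
  obtain ⟨h₀, hh₀1, hh₀⟩ := sstar_unif_small hVanti hSV (show (0:ℝ) < ε/8 by linarith)
  set h := max (h₀ + 1) (max z₀ 1 + 1) with hdef
  have hh1 : 1 ≤ h := by
    have : max z₀ 1 + 1 ≤ h := le_max_right _ _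
    have := le_max_right z₀ 1
    linarith
  have hhz₀ : z₀ ≤ h := by
    have : max z₀ 1 + 1 ≤ h := le_max_right _ _
    have := le_max_left z₀ 1
    linarith
  have hhh₀ : h₀ ≤ h - 1 := by
    have : h₀ + 1 ≤ h := le_max_left _ _
    linarith
  refine ⟨h, hh1, ?_⟩
  filter_upwards [eventually_ge_atTop (2*h), hh₀ (h-1) hhh₀] with x hx2 hsmall
  set N := ⌊x - 2*h⌋₊ + 1 with hN
  have hx2h : (0:ℝ) ≤ x - 2*h := by linarith
  have hN1 : (N:ℝ) ≤ x - 2*h + 1 := by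
    rw [hN]
    push_cast
    linarith [Nat.floor_le hx2h]
  have hN2 : x - 2*h < N := by
    rw [hN]
    push_cast
    linarith [Nat.lt_floor_add_one (x - 2*h)]
  set B : ℕ → Set Ω := fun k =>
    Y₁ ⁻¹' Set.Ico (h + k) (h + k + 1) ∩ Y₂ ⁻¹' Set.Ioi (x - h - (k + 1)) with hB
  have hsub : {ω | x < Y₁ ω + Y₂ ω} ⊆
      (Y₁ ⁻¹' Set.Ioi (x - h) ∪ Y₂ ⁻¹' Set.Ioi (x - h)) ∪ ⋃ k ∈ Finset.range N, B k := by
    intro ω hω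
    simp only [Set.mem_setOf_eq] at hω
    by_cases c1 : x - h < Y₁ ω
    · exact Or.inl (Or.inl c1)
    by_cases c2 : Y₁ ω < h
    · exact Or.inl (Or.inr (by simp only [Set.mem_preimage, Set.mem_Ioi]; linarith))
    push_neg at c1 c2
    right
    have hk0 : (0:ℝ) ≤ Y₁ ω - h := by linarith
    set k := ⌊Y₁ ω - h⌋₊ with hk
    have hkle : (k:ℝ) ≤ Y₁ ω - h := Nat.floor_le hk0
    have hklt : Y₁ ω - h < k + 1 := Nat.lt_floor_add_one _
    have hkN : k < N := by
      have h1 : (k:ℝ) ≤ x - 2*h := by linarith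
      have h2 : k ≤ ⌊x - 2*h⌋₊ := Nat.le_floor (by exact_mod_cast h1)
      omega
    simp only [Set.mem_iUnion, Finset.mem_range]
    refine ⟨k, hkN, ?_⟩
    simp only [hB, Set.mem_inter_iff, Set.mem_preimage, Set.mem_Ico, Set.mem_Ioi]
    exact ⟨⟨by linarith, by linarith⟩, by linarith⟩
  have hintBk : ∀ (a b : ℝ), IntervalIntegrable (fun y => V (x - y) * V y) volume a b :=
    fun a b => intervalIntegrable_tail_prod hVanti hVanti hVnn hVnn x a b
  have hunit : ∀ a : ℝ, V (x - a) * V (a + 1) ≤ ∫ y in a..(a+1), V (x - y) * V y := by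
    intro a
    have hconst : (∫ _y in a..(a+1), V (x - a) * V (a + 1)) = V (x - a) * V (a + 1) := by simp
    rw [← hconst]
    apply intervalIntegral.integral_mono_on (by linarith)
      intervalIntegrable_const (hintBk a (a+1))
    intro y hy
    exact mul_le_mul (hVanti (by linarith [hy.1])) (hVanti hy.2) (hVnn _) (hVnn _)
  have hmeasB : ∀ k ∈ Finset.range N, (P (B k)).toReal
      ≤ 8 * ∫ y in (h + (k:ℝ))..(h + (k:ℝ) + 1), V (x - y) * V y := by
    intro k hkN
    rw [Finset.mem_range] at hkN
    have hk0 : (0:ℝ) ≤ (k:ℝ) := Nat.cast_nonneg k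
    have hkx : (k:ℝ) ≤ x - 2*h := by
      have h1 : (k:ℝ) + 1 ≤ N := by exact_mod_cast Nat.succ_le_of_lt hkN
      linarith
    have e1 := hindep.measure_inter_preimage_eq_mul (Set.Ico (h + (k:ℝ)) (h + (k:ℝ) + 1))
      (Set.Ioi (x - h - ((k:ℝ) + 1))) measurableSet_Ico measurableSet_Ioi
    have hBtoReal : (P (B k)).toReal
        = (P (Y₁ ⁻¹' Set.Ico (h + (k:ℝ)) (h + (k:ℝ) + 1))).toReal
          * (P (Y₂ ⁻¹' Set.Ioi (x - h - ((k:ℝ) + 1)))).toReal := by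
      rw [hB]
      simp only []
      rw [e1, ENNReal.toReal_mul]
    have hb1 : (P (Y₁ ⁻¹' Set.Ico (h + (k:ℝ)) (h + (k:ℝ) + 1))).toReal ≤ V (h + (k:ℝ) - 1) := by
      refine le_trans ?_ (hG₁V (h + (k:ℝ) - 1))
      apply ENNReal.toReal_mono (measure_ne_top _ _)
      apply measure_mono
      intro ω hω
      simp only [Set.mem_preimage, Set.mem_Ico] at hω
      show h + (k:ℝ) - 1 < Y₁ ω
      linarith [hω.1]
    have hb2 : (P (Y₂ ⁻¹' Set.Ioi (x - h - ((k:ℝ) + 1)))).toReal ≤ V (x - h - ((k:ℝ) + 1)) :=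
      hG₂V _
    have r1 : V (h + (k:ℝ) - 1) ≤ 2 * V (h + (k:ℝ)) := by
      have := hz₀ (h + (k:ℝ)) (by linarith)
      linarith
    have r2 : V (h + (k:ℝ)) ≤ 2 * V (h + (k:ℝ) + 1) := by
      have := hz₀ (h + (k:ℝ) + 1) (by linarith)
      rw [show h + (k:ℝ) + 1 - 1 = h + (k:ℝ) by ring] at this
      linarith
    have r3 : V (x - h - ((k:ℝ) + 1)) ≤ 2 * V (x - (h + (k:ℝ))) := by
      have hge : z₀ ≤ x - h - (k:ℝ) := by linarith
      have := hz₀ (x - h - (k:ℝ)) hge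
      rw [show x - h - (k:ℝ) - 1 = x - h - ((k:ℝ) + 1) by ring] at this
      rw [show x - (h + (k:ℝ)) = x - h - (k:ℝ) by ring]
      linarith
    have hp : (P (B k)).toReal ≤ 8 * (V (x - (h + (k:ℝ))) * V ((h + (k:ℝ)) + 1)) := by
      rw [hBtoReal]
      calc (P (Y₁ ⁻¹' Set.Ico (h + (k:ℝ)) (h + (k:ℝ) + 1))).toReal
            * (P (Y₂ ⁻¹' Set.Ioi (x - h - ((k:ℝ) + 1)))).toReal
          ≤ V (h + (k:ℝ) - 1) * V (x - h - ((k:ℝ) + 1)) :=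
            mul_le_mul hb1 hb2 ENNReal.toReal_nonneg (hVnn _)
        _ ≤ (4 * V (h + (k:ℝ) + 1)) * (2 * V (x - (h + (k:ℝ)))) := by
            apply mul_le_mul (by linarith) r3 (hVnn _)
            have := hVnn (h + (k:ℝ) + 1); linarith
        _ = 8 * (V (x - (h + (k:ℝ))) * V ((h + (k:ℝ)) + 1)) := by ring
    calc (P (B k)).toReal ≤ 8 * (V (x - (h + (k:ℝ))) * V ((h + (k:ℝ)) + 1)) := hp
      _ ≤ 8 * ∫ y in (h + (k:ℝ))..(h + (k:ℝ) + 1), V (x - y) * V y := by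
          have := hunit (h + (k:ℝ)); linarith
  have hmeas : P {ω | x < Y₁ ω + Y₂ ω}
      ≤ P (Y₁ ⁻¹' Set.Ioi (x - h)) + P (Y₂ ⁻¹' Set.Ioi (x - h))
        + ∑ k ∈ Finset.range N, P (B k) := by
    calc P {ω | x < Y₁ ω + Y₂ ω}
        ≤ P ((Y₁ ⁻¹' Set.Ioi (x-h) ∪ Y₂ ⁻¹' Set.Ioi (x-h)) ∪ ⋃ k ∈ Finset.range N, B k) :=
          measure_mono hsub
      _ ≤ P (Y₁ ⁻¹' Set.Ioi (x-h) ∪ Y₂ ⁻¹' Set.Ioi (x-h)) + P (⋃ k ∈ Finset.range N, B k) :=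
          measure_union_le _ _
      _ ≤ (P (Y₁ ⁻¹' Set.Ioi (x-h)) + P (Y₂ ⁻¹' Set.Ioi (x-h)))
            + ∑ k ∈ Finset.range N, P (B k) :=
          add_le_add (measure_union_le _ _) (measure_biUnion_finset_le _ _)
  have hsumfin : (∑ k ∈ Finset.range N, P (B k)) ≠ ⊤ :=
    (ENNReal.sum_lt_top.mpr fun k _ => measure_lt_top P _).ne
  have hRfin : P (Y₁ ⁻¹' Set.Ioi (x - h)) + P (Y₂ ⁻¹' Set.Ioi (x - h))
      + ∑ k ∈ Finset.range N, P (B k) ≠ ⊤ :=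
    ENNReal.add_ne_top.mpr
      ⟨ENNReal.add_ne_top.mpr ⟨measure_ne_top _ _, measure_ne_top _ _⟩, hsumfin⟩
  have htR := ENNReal.toReal_mono hRfin hmeas
  rw [ENNReal.toReal_add (ENNReal.add_ne_top.mpr ⟨measure_ne_top _ _, measure_ne_top _ _⟩) hsumfin,
    ENNReal.toReal_add (measure_ne_top _ _) (measure_ne_top _ _),
    ENNReal.toReal_sum (fun k _ => measure_ne_top _ _)] at htR
  have hsum2 : ∑ k ∈ Finset.range N, (P (B k)).toReal
      ≤ 8 * ∫ y in (h-1)..(x-(h-1)), V (x - y) * V y := by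
    have hadj : ∑ k ∈ Finset.range N, (∫ y in (h + (k:ℝ))..(h + (k:ℝ) + 1), V (x - y) * V y)
        = ∫ y in h..(h + (N:ℝ)), V (x - y) * V y := by
      have key := intervalIntegral.sum_integral_adjacent_intervals
        (a := fun k : ℕ => h + (k:ℝ)) (n := N) (μ := volume)
        (f := fun y => V (x - y) * V y) (fun k _ => hintBk _ _)
      simp only [Nat.cast_zero, add_zero] at key
      rw [← key]
      apply Finset.sum_congr rfl
      intro k _
      congr 1
      push_cast
      ring
    calc ∑ k ∈ Finset.range N, (P (B k)).toReal
        ≤ ∑ k ∈ Finset.range N, 8 * ∫ y in (h + (k:ℝ))..(h + (k:ℝ) + 1), V (x - y) * V y :=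
          Finset.sum_le_sum hmeasB
      _ = 8 * ∑ k ∈ Finset.range N, ∫ y in (h + (k:ℝ))..(h + (k:ℝ) + 1), V (x - y) * V y := by
          rw [Finset.mul_sum]
      _ = 8 * ∫ y in h..(h + (N:ℝ)), V (x - y) * V y := by rw [hadj]
      _ ≤ 8 * ∫ y in (h-1)..(x-(h-1)), V (x - y) * V y := by
          have hN0 : (0:ℝ) ≤ (N:ℝ) := Nat.cast_nonneg N
          have hmono := intervalIntegral.integral_mono_interval (μ := volume)
            (a := h) (b := h + (N:ℝ)) (c := h - 1) (d := x - (h - 1))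
            (by linarith) (by linarith) (by linarith)
            (by filter_upwards with y using mul_nonneg (hVnn _) (hVnn _)) (hintBk _ _)
          linarith
  have hfinal : ∑ k ∈ Finset.range N, (P (B k)).toReal ≤ ε * V x := by
    have : (8:ℝ) * ∫ y in (h-1)..(x-(h-1)), V (x - y) * V y ≤ 8 * (ε/8 * V x) := by
      linarith [hsmall]
    calc ∑ k ∈ Finset.range N, (P (B k)).toReal
        ≤ 8 * ∫ y in (h-1)..(x-(h-1)), V (x - y) * V y := hsum2
      _ ≤ 8 * (ε/8 * V x) := this
      _ = ε * V x := by ring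
  have hA1 : (P (Y₁ ⁻¹' Set.Ioi (x - h))).toReal = tailF P Y₁ (x - h) := rfl
  have hA2 : (P (Y₂ ⁻¹' Set.Ioi (x - h))).toReal = tailF P Y₂ (x - h) := rfl
  have hT : tailF P (fun ω => Y₁ ω + Y₂ ω) x = (P {ω | x < Y₁ ω + Y₂ ω}).toReal := rfl
  rw [hT]
  rw [hA1, hA2] at htR
  linarith

lemma master {Y₁ Y₂ Y : Ω → ℝ}
    (mY₁ : Measurable Y₁) (mY₂ : Measurable Y₂)
    (hindep : IndepFun Y₁ Y₂ P)
    (hle₁ : ∀ ω, Y₁ ω ≤ Y ω) (hle₂ : ∀ ω, Y₂ ω ≤ Y ω) (hub : ∀ ω, Y ω ≤ Y₁ ω + Y₂ ω)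
    (hL₁ : LongTailedFun (tailF P Y₁)) (hL₂ : LongTailedFun (tailF P Y₂))
    {V : ℝ → ℝ} (hVanti : Antitone V) (hSV : StrongSubexpFun V)
    (hG₁V : ∀ x, tailF P Y₁ x ≤ V x) (hG₂V : ∀ x, tailF P Y₂ x ≤ V x)
    (hTV : ∀ x, tailF P Y x ≤ V x)
    (hVH : ∀ x, V x ≤ tailF P (fun ω => Y₁ ω + Y₂ ω) x) :
    Tendsto (fun x => tailF P Y x / tailF P (fun ω => Y₁ ω + Y₂ ω) x) atTop (nhds 1) ∧
      StrongSubexpFun (tailF P Y) ∧ StrongSubexpFun (tailF P (fun ω => Y₁ ω + Y₂ ω)) := by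
  have hG₁pos := hL₁.1
  have hG₂pos := hL₂.1
  have hTanti := tailF_antitone P Y
  have hHanti := tailF_antitone P (fun ω => Y₁ ω + Y₂ ω)
  have hTH : ∀ x, tailF P Y x ≤ tailF P (fun ω => Y₁ ω + Y₂ ω) x :=
    fun x => tailF_mono_fun P hub x
  have hG₁T : ∀ x, tailF P Y₁ x ≤ tailF P Y x := fun x => tailF_mono_fun P hle₁ x
  have hTpos : ∀ x, 0 < tailF P Y x := fun x => lt_of_lt_of_le (hG₁pos x) (hG₁T x)
  have hHpos : ∀ x, 0 < tailF P (fun ω => Y₁ ω + Y₂ ω) x :=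
    fun x => lt_of_lt_of_le (hSV.1 x) (hVH x)
  have hG2to0 : Tendsto (tailF P Y₂) atTop (nhds 0) := tailF_tendsto_zero P mY₂
  have hGpos : ∀ x, 0 < tailF P Y₁ x + tailF P Y₂ x :=
    fun x => add_pos (hG₁pos x) (hG₂pos x)
  -- inclusion-exclusion lower bound
  have hlow : ∀ x, tailF P Y₁ x + tailF P Y₂ x - tailF P Y₁ x * tailF P Y₂ x
      ≤ tailF P Y x := by
    intro x
    have hmi := measure_union_add_inter (μ := P) (s := Y₁ ⁻¹' Set.Ioi x)
      (t := Y₂ ⁻¹' Set.Ioi x) (mY₂ measurableSet_Ioi)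
    have hprod := hindep.measure_inter_preimage_eq_mul (Set.Ioi x) (Set.Ioi x)
      measurableSet_Ioi measurableSet_Ioi
    have hsubY : (Y₁ ⁻¹' Set.Ioi x ∪ Y₂ ⁻¹' Set.Ioi x) ⊆ {ω | x < Y ω} := by
      rintro ω (hω | hω)
      · exact lt_of_lt_of_le hω (hle₁ ω)
      · exact lt_of_lt_of_le hω (hle₂ ω)
    have h1 : (P (Y₁ ⁻¹' Set.Ioi x ∪ Y₂ ⁻¹' Set.Ioi x)).toReal
        = tailF P Y₁ x + tailF P Y₂ x - tailF P Y₁ x * tailF P Y₂ x := by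
      have h2 := congrArg ENNReal.toReal hmi
      rw [hprod] at h2
      rw [ENNReal.toReal_add (measure_ne_top _ _) (by
            rw [← hprod]; exact measure_ne_top _ _),
          ENNReal.toReal_add (measure_ne_top _ _) (measure_ne_top _ _),
          ENNReal.toReal_mul] at h2
      have e1 : (P (Y₁ ⁻¹' Set.Ioi x)).toReal = tailF P Y₁ x := rfl
      have e2 : (P (Y₂ ⁻¹' Set.Ioi x)).toReal = tailF P Y₂ x := rfl
      rw [e1, e2] at h2
      linarith
    rw [← h1]
    exact ENNReal.toReal_mono (measure_ne_top _ _) (measure_mono hsubY)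
  -- upper bound: H ≤ (1+ε)(G₁+G₂) eventually
  have hup : ∀ ε > (0:ℝ), ∀ᶠ x in atTop, tailF P (fun ω => Y₁ ω + Y₂ ω) x
      ≤ (1 + ε) * (tailF P Y₁ x + tailF P Y₂ x) := by
    intro ε hε
    have hε'pos : 0 < min (ε/4) (1/2) := lt_min (by linarith) (by norm_num)
    set ε' := min (ε/4) (1/2) with hε'def
    have hε'1 : ε' ≤ ε/4 := min_le_left _ _
    have hε'2 : ε' ≤ 1/2 := min_le_right _ _
    obtain ⟨h, hh1, hbound⟩ := conv_upper_bound P mY₁ mY₂ hindep hVanti hSV hG₁V hG₂V hε'pos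
    have hlt₁ := ratio_event hG₁pos (hL₁.2 h (lt_of_lt_of_le one_pos hh1)) hε'pos
    have hlt₂ := ratio_event hG₂pos (hL₂.2 h (lt_of_lt_of_le one_pos hh1)) hε'pos
    filter_upwards [hbound, hlt₁, hlt₂] with x hb h1 h2
    have hVH' := hVH x
    have hH := hHpos x
    have hg := hGpos x
    have k1 : (1 - ε') * tailF P (fun ω => Y₁ ω + Y₂ ω) x
        ≤ (1 + ε') * (tailF P Y₁ x + tailF P Y₂ x) := by nlinarith
    have k2 : (1 + ε') ≤ (1 + ε) * (1 - ε') := by nlinarith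
    have k3 : (1 + ε') * (tailF P Y₁ x + tailF P Y₂ x)
        ≤ ((1 + ε) * (1 - ε')) * (tailF P Y₁ x + tailF P Y₂ x) :=
      mul_le_mul_of_nonneg_right k2 hg.le
    have k4 : (1 - ε') * tailF P (fun ω => Y₁ ω + Y₂ ω) x
        ≤ (1 - ε') * ((1 + ε) * (tailF P Y₁ x + tailF P Y₂ x)) := by nlinarith
    exact le_of_mul_le_mul_left k4 (by linarith : (0:ℝ) < 1 - ε')
  -- lower bound: (1-ε)(G₁+G₂) ≤ T eventually
  have hlowg : ∀ ε > (0:ℝ), ∀ᶠ x in atTop,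
      (1 - ε) * (tailF P Y₁ x + tailF P Y₂ x) ≤ tailF P Y x := by
    intro ε hε
    filter_upwards [hG2to0.eventually_lt_const hε] with x hx
    have hb : tailF P Y₁ x * tailF P Y₂ x ≤ ε * (tailF P Y₁ x + tailF P Y₂ x) := by
      nlinarith [hG₁pos x, hG₂pos x, (hG₂pos x).le]
    linarith [hlow x]
  -- ratios to g := G₁+G₂
  have hHg : Tendsto (fun x => tailF P (fun ω => Y₁ ω + Y₂ ω) x
      / (tailF P Y₁ x + tailF P Y₂ x)) atTop (nhds 1) := by
    apply tendsto_ratio_one hGpos hup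
    intro ε hε
    filter_upwards [hlowg ε hε] with x hx
    exact le_trans hx (hTH x)
  have hTg : Tendsto (fun x => tailF P Y x
      / (tailF P Y₁ x + tailF P Y₂ x)) atTop (nhds 1) := by
    apply tendsto_ratio_one hGpos
    · intro ε hε
      filter_upwards [hup ε hε] with x hx
      exact le_trans (hTH x) hx
    · exact hlowg
  have hVg : Tendsto (fun x => V x / (tailF P Y₁ x + tailF P Y₂ x)) atTop (nhds 1) := by
    apply tendsto_ratio_one hGpos
    · intro ε hε
      filter_upwards [hup ε hε] with x hx
      exact le_trans (hVH x) hx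
    · intro ε hε
      filter_upwards [hlowg ε hε] with x hx
      exact le_trans hx (hTV x)
  have hdiv : ∀ (f : ℝ → ℝ) (w : ℝ → ℝ), (∀ x, 0 < w x) →
      Tendsto (fun x => f x / (tailF P Y₁ x + tailF P Y₂ x)) atTop (nhds 1) →
      Tendsto (fun x => w x / (tailF P Y₁ x + tailF P Y₂ x)) atTop (nhds 1) →
      Tendsto (fun x => f x / w x) atTop (nhds 1) := by
    intro f w hw hf hwg
    have := hf.div hwg one_ne_zero
    rw [show (1:ℝ)/1 = 1 by norm_num] at this
    apply this.congr
    intro x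
    show f x / (tailF P Y₁ x + tailF P Y₂ x) / (w x / (tailF P Y₁ x + tailF P Y₂ x)) = f x / w x
    rw [div_div_div_cancel_right₀ (hGpos x).ne']
  have c1 : Tendsto (fun x => tailF P Y x / tailF P (fun ω => Y₁ ω + Y₂ ω) x)
      atTop (nhds 1) := hdiv _ _ hHpos hTg hHg
  have cTV : Tendsto (fun x => tailF P Y x / V x) atTop (nhds 1) :=
    hdiv _ _ hSV.1 hTg hVg
  have cHV : Tendsto (fun x => tailF P (fun ω => Y₁ ω + Y₂ ω) x / V x) atTop (nhds 1) :=
    hdiv _ _ hSV.1 hHg hVg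
  exact ⟨c1, sstar_of_tail_equiv hVanti hSV hTanti hTpos cTV,
    sstar_of_tail_equiv hVanti hSV hHanti hHpos cHV⟩

end Prob

theorem statement5 {d : ℕ} (A : Set (Fin d → ℝ)) (hA : MemR A)
    {Ω : Type*} [MeasurableSpace Ω] (P : Measure Ω) [IsProbabilityMeasure P]
    (X₁ X₂ : Ω → (Fin d → ℝ)) (hX₁ : Measurable X₁) (hX₂ : Measurable X₂)
    (hX₁pos : ∀ ω i, 0 ≤ X₁ ω i) (hX₂pos : ∀ ω i, 0 ≤ X₂ ω i)
    (hindep : IndepFun X₁ X₂ P)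
    (hL₁ : LongTailedFun (tailYA P X₁ A)) (hL₂ : LongTailedFun (tailYA P X₂ A)) :
    (StrongSubexpFun (fun x => (P {ω | x < YA X₁ A ω + YA X₂ A ω}).toReal) →
      Tendsto (fun x => probIn P (fun ω => X₁ ω + X₂ ω) A x /
          (P {ω | x < YA X₁ A ω + YA X₂ A ω}).toReal) atTop (nhds 1) ∧
        StrongSubexpFun (tailYA P (fun ω => X₁ ω + X₂ ω) A)) ∧
    (StrongSubexpFun (tailYA P (fun ω => X₁ ω + X₂ ω) A) →
      StrongSubexpFun (fun x => (P {ω | x < YA X₁ A ω + YA X₂ A ω}).toReal)) := by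
  have hmg : Measurable (gA A) := measurable_gA hA
  have hY₁m : Measurable (YA X₁ A) := hmg.comp hX₁
  have hY₂m : Measurable (YA X₂ A) := hmg.comp hX₂
  have hYind : IndepFun (YA X₁ A) (YA X₂ A) P := hindep.comp hmg hmg
  have hle₁ : ∀ ω, YA X₁ A ω ≤ YA (fun ω => X₁ ω + X₂ ω) A ω :=
    fun ω => gA_le_add_right hA (X₁ ω) (X₂ ω) (hX₂pos ω)
  have hle₂ : ∀ ω, YA X₂ A ω ≤ YA (fun ω => X₁ ω + X₂ ω) A ω := by
    intro ω
    have h := gA_le_add_right hA (X₂ ω) (X₁ ω) (hX₁pos ω)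
    rw [add_comm] at h
    exact h
  have hub : ∀ ω, YA (fun ω => X₁ ω + X₂ ω) A ω ≤ YA X₁ A ω + YA X₂ A ω :=
    fun ω => gA_add_le hA (X₁ ω) (X₂ ω)
  have hY₁nn : ∀ ω, 0 ≤ YA X₁ A ω := fun ω => gA_nonneg _
  have hY₂nn : ∀ ω, 0 ≤ YA X₂ A ω := fun ω => gA_nonneg _
  have hL₁' : LongTailedFun (tailF P (YA X₁ A)) := hL₁
  have hL₂' : LongTailedFun (tailF P (YA X₂ A)) := hL₂
  have hG₁T : ∀ x, tailF P (YA X₁ A) x ≤ tailF P (YA (fun ω => X₁ ω + X₂ ω) A) x :=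
    fun x => tailF_mono_fun P hle₁ x
  have hG₂T : ∀ x, tailF P (YA X₂ A) x ≤ tailF P (YA (fun ω => X₁ ω + X₂ ω) A) x :=
    fun x => tailF_mono_fun P hle₂ x
  have hTH : ∀ x, tailF P (YA (fun ω => X₁ ω + X₂ ω) A) x
      ≤ tailF P (fun ω => YA X₁ A ω + YA X₂ A ω) x := fun x => tailF_mono_fun P hub x
  constructor
  · intro hSH
    have hSH' : StrongSubexpFun (tailF P (fun ω => YA X₁ A ω + YA X₂ A ω)) := hSH
    have hHanti : Antitone (tailF P (fun ω => YA X₁ A ω + YA X₂ A ω)) := tailF_antitone P _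
    have hG₁H : ∀ x, tailF P (YA X₁ A) x ≤ tailF P (fun ω => YA X₁ A ω + YA X₂ A ω) x :=
      fun x => tailF_mono_fun P (fun ω => le_add_of_nonneg_right (hY₂nn ω)) x
    have hG₂H : ∀ x, tailF P (YA X₂ A) x ≤ tailF P (fun ω => YA X₁ A ω + YA X₂ A ω) x :=
      fun x => tailF_mono_fun P (fun ω => le_add_of_nonneg_left (hY₁nn ω)) x
    obtain ⟨c1, c2, _c3⟩ := master P hY₁m hY₂m hYind hle₁ hle₂ hub hL₁' hL₂'
      hHanti hSH' hG₁H hG₂H hTH (fun x => le_rfl)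
    refine ⟨?_, c2⟩
    apply Tendsto.congr' ?_ c1
    filter_upwards [eventually_gt_atTop (0:ℝ)] with x hx
    have hset : {ω | x < YA (fun ω => X₁ ω + X₂ ω) A ω}
        = {ω | (fun ω => X₁ ω + X₂ ω) ω ∈ x • A} := by
      ext ω
      exact lt_gA_iff hA hx
    show tailF P (YA (fun ω => X₁ ω + X₂ ω) A) x / _ = _
    rw [tailF, hset]
    rfl
  · intro hST
    have hST' : StrongSubexpFun (tailF P (YA (fun ω => X₁ ω + X₂ ω) A)) := hST
    have hTanti : Antitone (tailF P (YA (fun ω => X₁ ω + X₂ ω) A)) := tailF_antitone P _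
    exact (master P hY₁m hY₂m hYind hle₁ hle₂ hub hL₁' hL₂'
      hTanti hST' hG₁T hG₂T (fun x => le_rfl) hTH).2.2
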